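/- (Proposition 1) Let n ≥ 1, let f₀, …, f_n : ℂ → ℂ be entire functions, and let z₁ ∈ ℂ. Suppose there are indices m ≠ k in {0, …, n} such that |f_m(z₁)| = |f_k(z₁)| ≥ |f_j(z₁)| for all j ∈ {0, …, n}, and f_m(z₁) ≠ 0. Then ‖f′‖(z₁) ≥ (n+1)^{-1} |f_m′(z₁)/f_m(z₁) − f_k′(z₁)/f_k(z₁)|. -/

import Mathlib

open MeasureTheory Filter Metric

/-- The Fubini–Study derivative of the holomorphic curve with homogeneous
representation `f : Fin (n+1) → ℂ → ℂ`. -/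
noncomputable def fsDeriv {n : ℕ} (f : Fin (n + 1) → ℂ → ℂ) (z : ℂ) : ℝ :=
  (∑ j, ‖f j z‖ ^ 2)⁻¹ *
    Real.sqrt (∑ i : Fin (n + 1), ∑ j : Fin (n + 1),
      if i < j then ‖deriv (f i) z * f j z - f i z * deriv (f j) z‖ ^ 2 else 0)

/-- Proposition 1: if at a point `z₁` two of the moduli `|f_m(z₁)| = |f_k(z₁)|` (with
`m ≠ k`) are maximal among `|f_j(z₁)|`, `0 ≤ j ≤ n`, and nonzero, then
`‖f′‖(z₁) ≥ (n+1)⁻¹ |f_m′(z₁)/f_m(z₁) − f_k′(z₁)/f_k(z₁)|`. -/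
theorem fsDeriv_ge_log_gradient_diff {n : ℕ} (hn : 1 ≤ n)
    (f : Fin (n + 1) → ℂ → ℂ) (hf : ∀ j, Differentiable ℂ (f j))
    (z₁ : ℂ) (m k : Fin (n + 1)) (hmk : m ≠ k)
    (heq : ‖f m z₁‖ = ‖f k z₁‖)
    (hmax : ∀ j, ‖f j z₁‖ ≤ ‖f m z₁‖)
    (hne : f m z₁ ≠ 0) :
    ((n : ℝ) + 1)⁻¹ *
        ‖deriv (f m) z₁ / f m z₁ - deriv (f k) z₁ / f k z₁‖ ≤ fsDeriv f z₁ := by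
  have hk : f k z₁ ≠ 0 := by
    intro h
    apply hne
    rw [← norm_eq_zero] at h ⊢
    rw [heq, h]
  set W : ℂ := deriv (f m) z₁ * f k z₁ - f m z₁ * deriv (f k) z₁ with hW
  have hA : 0 < ‖f m z₁‖ := norm_pos_iff.mpr hne
  have habs : ‖deriv (f m) z₁ / f m z₁ - deriv (f k) z₁ / f k z₁‖
      = ‖W‖ / ‖f m z₁‖ ^ 2 := by
    rw [div_sub_div _ _ hne hk, norm_div, norm_mul, ← heq, sq]
  set S : ℝ := ∑ j, ‖f j z₁‖ ^ 2 with hS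
  set T : ℝ := ∑ i : Fin (n + 1), ∑ j : Fin (n + 1),
      if i < j then ‖deriv (f i) z₁ * f j z₁ - f i z₁ * deriv (f j) z₁‖ ^ 2 else 0
    with hT
  have hSpos : 0 < S := by
    refine Finset.sum_pos' (fun j _ => sq_nonneg _) ⟨m, Finset.mem_univ m, ?_⟩
    positivity
  have hSle : S ≤ ((n : ℝ) + 1) * ‖f m z₁‖ ^ 2 := by
    calc S ≤ ∑ _j : Fin (n + 1), ‖f m z₁‖ ^ 2 :=
          Finset.sum_le_sum (fun j _ => pow_le_pow_left₀ (norm_nonneg _) (hmax j) 2)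
      _ = ((n : ℝ) + 1) * ‖f m z₁‖ ^ 2 := by
          rw [Finset.sum_const, Finset.card_univ, Fintype.card_fin, nsmul_eq_mul]
          push_cast; ring
  have hterm : ∀ (i j : Fin (n + 1)), (0 : ℝ) ≤
      if i < j then ‖deriv (f i) z₁ * f j z₁ - f i z₁ * deriv (f j) z₁‖ ^ 2 else 0 := by
    intro i j
    split <;> [exact sq_nonneg _; exact le_refl 0]
  have hTge : ‖W‖ ^ 2 ≤ T := by
    rcases lt_or_gt_of_ne hmk with h | h
    · calc ‖W‖ ^ 2
          = if m < k then ‖deriv (f m) z₁ * f k z₁ - f m z₁ * deriv (f k) z₁‖ ^ 2 else 0 := by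
            rw [if_pos h]
        _ ≤ ∑ j : Fin (n + 1),
              if m < j then ‖deriv (f m) z₁ * f j z₁ - f m z₁ * deriv (f j) z₁‖ ^ 2 else 0 :=
            Finset.single_le_sum (fun j _ => hterm m j) (Finset.mem_univ k)
        _ ≤ T := Finset.single_le_sum
            (fun i _ => Finset.sum_nonneg (fun j _ => hterm i j)) (Finset.mem_univ m)
    · have hWabs : ‖W‖ =
          ‖deriv (f k) z₁ * f m z₁ - f k z₁ * deriv (f m) z₁‖ := by
        rw [hW, ← norm_neg]; ring_nf
      calc ‖W‖ ^ 2
          = if k < m then ‖deriv (f k) z₁ * f m z₁ - f k z₁ * deriv (f m) z₁‖ ^ 2 else 0 := by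
            rw [if_pos h, hWabs]
        _ ≤ ∑ j : Fin (n + 1),
              if k < j then ‖deriv (f k) z₁ * f j z₁ - f k z₁ * deriv (f j) z₁‖ ^ 2 else 0 :=
            Finset.single_le_sum (fun j _ => hterm k j) (Finset.mem_univ m)
        _ ≤ T := Finset.single_le_sum
            (fun i _ => Finset.sum_nonneg (fun j _ => hterm i j)) (Finset.mem_univ k)
  have hsqrt : ‖W‖ ≤ Real.sqrt T := by
    rw [show ‖W‖ = Real.sqrt (‖W‖ ^ 2) from
      (Real.sqrt_sq (norm_nonneg _)).symm]
    exact Real.sqrt_le_sqrt hTge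
  rw [fsDeriv, ← hS, ← hT, habs]
  calc ((n : ℝ) + 1)⁻¹ * (‖W‖ / ‖f m z₁‖ ^ 2)
      = ‖W‖ / (((n : ℝ) + 1) * ‖f m z₁‖ ^ 2) := by
        field_simp
    _ ≤ Real.sqrt T / S :=
        div_le_div₀ (Real.sqrt_nonneg _) hsqrt hSpos hSle
    _ = S⁻¹ * Real.sqrt T := by rw [div_eq_mul_inv, mul_comm]
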